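/- Assume in addition that there are γ ∈ [1,d] and C_μ ≥ 1 with μ(B(θ,r) ∩ S^{d−1}) ≤ C_μ r^{γ−1} for all θ ∈ S^{d−1} and all r ∈ (0,1/2]. Then there exists a constant C > 0, depending only on κ, α, γ, C_μ and μ(S^{d−1}), such that μ_S(B(x,r) ∩ S^{d−1}) ≤ C r^{γ−1} for all x ∈ S^{d−1} and all r ∈ (0,1/2]. -/

import Mathlib

open MeasureTheory Metric
open scoped ENNReal

noncomputable section

/-- Action of a `d × d` matrix on a vector of `EuclideanSpace ℝ (Fin d)`. -/
def matVec {d : ℕ} (M : Matrix (Fin d) (Fin d) ℝ) (x : EuclideanSpace ℝ (Fin d)) :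
    EuclideanSpace ℝ (Fin d) :=
  (EuclideanSpace.equiv (Fin d) ℝ).symm (M.mulVec (EuclideanSpace.equiv (Fin d) ℝ x))

/-- The image spectral measure `μ_S`: image of `|σ_v ς|^α dv μ(dς)` on `[0,1] × S^{d−1}` under
`(v,ς) ↦ σ_v ς / |σ_v ς|`. -/
def muS (d : ℕ) (α : ℝ) (σ : ℝ → Matrix (Fin d) (Fin d) ℝ)
    (μ : Measure (EuclideanSpace ℝ (Fin d))) : Measure (EuclideanSpace ℝ (Fin d)) :=
  Measure.map (fun p : ℝ × EuclideanSpace ℝ (Fin d) => ‖matVec (σ p.1) p.2‖⁻¹ • matVec (σ p.1) p.2)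
    (((((volume : Measure ℝ).restrict (Set.Icc 0 1)).prod μ).withDensity
      (fun p => ENNReal.ofReal (‖matVec (σ p.1) p.2‖ ^ α))))

lemma matVec_smul {d : ℕ} (M : Matrix (Fin d) (Fin d) ℝ) (c : ℝ)
    (x : EuclideanSpace ℝ (Fin d)) : matVec M (c • x) = c • matVec M x := by
  simp [matVec, Matrix.mulVec_smul]

lemma matVec_sub {d : ℕ} (M : Matrix (Fin d) (Fin d) ℝ)
    (x y : EuclideanSpace ℝ (Fin d)) : matVec M (x - y) = matVec M x - matVec M y := by
  simp [matVec, Matrix.mulVec_sub]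

lemma matVec_inv_matVec {d : ℕ} (M : Matrix (Fin d) (Fin d) ℝ) (h : IsUnit M.det)
    (x : EuclideanSpace ℝ (Fin d)) : matVec M (matVec M⁻¹ x) = x := by
  simp [matVec, Matrix.mulVec_mulVec, Matrix.mul_nonsing_inv _ h, Matrix.one_mulVec]
  change WithLp.toLp 2 (M.mulVec (M⁻¹.mulVec (WithLp.ofLp x))) = x
  simp [Matrix.mulVec_mulVec, Matrix.mul_nonsing_inv _ h, Matrix.one_mulVec]

lemma matVec_matVec_inv {d : ℕ} (M : Matrix (Fin d) (Fin d) ℝ) (h : IsUnit M.det)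
    (x : EuclideanSpace ℝ (Fin d)) : matVec M⁻¹ (matVec M x) = x := by
  simp [matVec, Matrix.mulVec_mulVec, Matrix.nonsing_inv_mul _ h, Matrix.one_mulVec]
  change WithLp.toLp 2 (M⁻¹.mulVec (M.mulVec (WithLp.ofLp x))) = x
  simp [Matrix.mulVec_mulVec, Matrix.nonsing_inv_mul _ h, Matrix.one_mulVec]

/-- quantitative continuity of normalization. -/
lemma normalize_sub_le {E : Type*} [NormedAddCommGroup E] [NormedSpace ℝ E]
    (a b : E) (ha : a ≠ 0) :
    ‖‖a‖⁻¹ • a - ‖b‖⁻¹ • b‖ ≤ 2 * ‖a - b‖ / ‖a‖ := by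
  have hna : (0:ℝ) < ‖a‖ := norm_pos_iff.2 ha
  rcases eq_or_ne b 0 with rfl | hb
  · have : ‖‖a‖⁻¹ • a - ‖(0:E)‖⁻¹ • (0:E)‖ = 1 := by
      simp [norm_smul, abs_of_nonneg (inv_nonneg.2 (norm_nonneg a)), inv_mul_cancel₀ hna.ne']
    rw [this, sub_zero, le_div_iff₀ hna]
    nlinarith
  · have hnb : (0:ℝ) < ‖b‖ := norm_pos_iff.2 hb
    have key : ‖a‖⁻¹ • a - ‖b‖⁻¹ • b = ‖a‖⁻¹ • (a - b) + (‖a‖⁻¹ - ‖b‖⁻¹) • b := by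
      rw [smul_sub, sub_smul]; abel
    rw [key]
    have h1 : ‖‖a‖⁻¹ • (a - b)‖ = ‖a - b‖ / ‖a‖ := by
      rw [norm_smul, Real.norm_eq_abs, abs_of_nonneg (inv_nonneg.2 (norm_nonneg a))]
      ring
    have h2 : ‖(‖a‖⁻¹ - ‖b‖⁻¹) • b‖ ≤ ‖a - b‖ / ‖a‖ := by
      rw [norm_smul, Real.norm_eq_abs]
      have : ‖a‖⁻¹ - ‖b‖⁻¹ = (‖b‖ - ‖a‖) / (‖a‖ * ‖b‖) := by
        field_simp
      rw [this, abs_div, abs_of_pos (mul_pos hna hnb)]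
      have habs : |‖b‖ - ‖a‖| ≤ ‖a - b‖ := by
        have := abs_norm_sub_norm_le b a
        rwa [show b - a = -(a-b) by abel, norm_neg] at this
      rw [div_mul_eq_mul_div, div_le_div_iff₀ (mul_pos hna hnb) hna]
      calc |‖b‖ - ‖a‖| * ‖b‖ * ‖a‖ ≤ ‖a - b‖ * ‖b‖ * ‖a‖ := by
            apply mul_le_mul_of_nonneg_right (mul_le_mul_of_nonneg_right habs hnb.le) hna.le
        _ = ‖a - b‖ * (‖a‖ * ‖b‖) := by ring
    calc ‖‖a‖⁻¹ • (a - b) + (‖a‖⁻¹ - ‖b‖⁻¹) • b‖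
        ≤ ‖‖a‖⁻¹ • (a - b)‖ + ‖(‖a‖⁻¹ - ‖b‖⁻¹) • b‖ := norm_add_le _ _
      _ ≤ ‖a - b‖ / ‖a‖ + ‖a - b‖ / ‖a‖ := by rw [h1]; exact add_le_add_right h2 _
      _ = 2 * ‖a - b‖ / ‖a‖ := by ring

set_option maxHeartbeats 1000000 in
/-- if `μ(B(θ,r) ∩ S^{d−1}) ≤ C_μ r^{γ−1}` for all `θ ∈ S^{d−1}` and
`r ∈ (0,1/2]`, then `μ_S` satisfies the same concentration estimate, with a constant depending
only on `κ, α, γ, C_μ` and `μ(S^{d−1})`. -/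
theorem stmt12 (d : ℕ) (hd : 1 ≤ d) (α : ℝ) (hα0 : 0 < α) (hα2 : α < 2)
    (μ : Measure (EuclideanSpace ℝ (Fin d))) (hμfin : IsFiniteMeasure μ)
    (hμsph : μ {θv : EuclideanSpace ℝ (Fin d) | ‖θv‖ ≠ 1} = 0)
    (σ : ℝ → Matrix (Fin d) (Fin d) ℝ)
    (hσmeas : ∀ i j, Measurable (fun v : ℝ => σ v i j))
    (hσinv : ∀ v ∈ Set.Icc (0:ℝ) 1, IsUnit (σ v).det)
    (κ : ℝ) (hκ : 1 ≤ κ)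
    (hell : ∀ v ∈ Set.Icc (0:ℝ) 1, ∀ ξ : EuclideanSpace ℝ (Fin d),
      κ⁻¹ * ‖ξ‖ ≤ ‖matVec (σ v) ξ‖ ∧ ‖matVec (σ v) ξ‖ ≤ κ * ‖ξ‖)
    (γ : ℝ) (hγ1 : 1 ≤ γ) (hγd : γ ≤ (d : ℝ))
    (C_μ : ℝ) (hCμ : 1 ≤ C_μ)
    (hconc : ∀ θv : EuclideanSpace ℝ (Fin d), ‖θv‖ = 1 → ∀ r : ℝ, 0 < r → r ≤ 1 / 2 →
      μ (ball θv r ∩ sphere (0 : EuclideanSpace ℝ (Fin d)) 1) ≤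
        ENNReal.ofReal (C_μ * r ^ (γ - 1))) :
    ∃ C > 0, ∀ x : EuclideanSpace ℝ (Fin d), ‖x‖ = 1 → ∀ r : ℝ, 0 < r → r ≤ 1 / 2 →
      muS d α σ μ (ball x r ∩ sphere (0 : EuclideanSpace ℝ (Fin d)) 1) ≤
        ENNReal.ofReal (C * r ^ (γ - 1)) := by
  haveI := hμfin
  have hκ0 : (0:ℝ) < κ := lt_of_lt_of_le one_pos hκ
  set Mtot : ℝ := (μ Set.univ).toReal with hMtot
  have hMtot0 : 0 ≤ Mtot := ENNReal.toReal_nonneg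
  set K₀ : ℝ := (C_μ + Mtot) * (4 * κ ^ 2) ^ (γ - 1) with hK₀
  have hγ0 : 0 ≤ γ - 1 := by linarith
  have h4κ : (1:ℝ) ≤ 4 * κ ^ 2 := by nlinarith
  have hK₀pos : 0 < K₀ := by
    apply mul_pos (by linarith)
    exact Real.rpow_pos_of_pos (by nlinarith) _
  have hκα : (0:ℝ) < κ ^ α := Real.rpow_pos_of_pos hκ0 _
  refine ⟨κ ^ α * K₀, by positivity, ?_⟩
  intro x hx r hr0 hr2
  -- notation
  set f : ℝ × EuclideanSpace ℝ (Fin d) → EuclideanSpace ℝ (Fin d) := fun p => ‖matVec (σ p.1) p.2‖⁻¹ • matVec (σ p.1) p.2 with hf_def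
  set g : ℝ × EuclideanSpace ℝ (Fin d) → ℝ≥0∞ := fun p => ENNReal.ofReal (‖matVec (σ p.1) p.2‖ ^ α) with hg_def
  set ν : Measure (ℝ × EuclideanSpace ℝ (Fin d)) := ((volume : Measure ℝ).restrict (Set.Icc 0 1)).prod μ with hν_def
  set A : Set (EuclideanSpace ℝ (Fin d)) := ball x r ∩ sphere (0:EuclideanSpace ℝ (Fin d)) 1 with hA_def
  have hA : MeasurableSet A := measurableSet_ball.inter (isClosed_sphere.measurableSet)
  -- measurability of matVec in both variables
  have hmv : Measurable (fun p : ℝ × EuclideanSpace ℝ (Fin d) => matVec (σ p.1) p.2) := by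
    have : Measurable (fun p : ℝ × EuclideanSpace ℝ (Fin d) => ((σ p.1).mulVec (EuclideanSpace.equiv (Fin d) ℝ p.2))) := by
      apply measurable_pi_lambda
      intro i
      simp only [Matrix.mulVec, dotProduct]
      apply Finset.measurable_sum
      intro j _
      exact ((hσmeas i j).comp measurable_fst).mul
        ((measurable_pi_apply j).comp
          ((EuclideanSpace.equiv (Fin d) ℝ).continuous.measurable.comp measurable_snd))
    exact ((EuclideanSpace.equiv (Fin d) ℝ).symm.continuous.measurable).comp this
  have hf : Measurable f := (hmv.norm.inv).smul hmv
  -- concentration estimate at radius 2κ²r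
  have hconc2 : ∀ θ : EuclideanSpace ℝ (Fin d), ‖θ‖ = 1 →
      μ (ball θ (2 * κ ^ 2 * r) ∩ sphere (0:EuclideanSpace ℝ (Fin d)) 1) ≤ ENNReal.ofReal (K₀ * r ^ (γ - 1)) := by
    intro θ hθ
    by_cases hcase : 2 * κ ^ 2 * r ≤ 1 / 2
    · have h2κr : 0 < 2 * κ ^ 2 * r := by positivity
      refine (hconc θ hθ _ h2κr hcase).trans (ENNReal.ofReal_le_ofReal ?_)
      have hsplit : (2 * κ ^ 2 * r) ^ (γ - 1) = (2 * κ ^ 2) ^ (γ - 1) * r ^ (γ - 1) :=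
        Real.mul_rpow (by positivity) hr0.le
      rw [hsplit, hK₀, ← mul_assoc]
      apply mul_le_mul_of_nonneg_right _ (Real.rpow_nonneg hr0.le _)
      apply mul_le_mul (by linarith)
        (Real.rpow_le_rpow (by positivity) (by nlinarith) hγ0)
        (Real.rpow_nonneg (by positivity) _) (by linarith)
    · push_neg at hcase
      have h1 : (1:ℝ) ≤ 4 * κ ^ 2 * r := by nlinarith
      calc μ (ball θ (2 * κ ^ 2 * r) ∩ sphere (0:EuclideanSpace ℝ (Fin d)) 1) ≤ μ Set.univ := measure_mono (by simp)
        _ = ENNReal.ofReal Mtot := by rw [hMtot, ENNReal.ofReal_toReal (measure_ne_top μ _)]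
        _ ≤ ENNReal.ofReal (K₀ * r ^ (γ - 1)) := by
            apply ENNReal.ofReal_le_ofReal
            have : (1:ℝ) ≤ (4 * κ ^ 2) ^ (γ - 1) * r ^ (γ - 1) := by
              rw [← Real.mul_rpow (by positivity) hr0.le]
              calc (1:ℝ) = 1 ^ (γ - 1) := (Real.one_rpow _).symm
                _ ≤ (4 * κ ^ 2 * r) ^ (γ - 1) := Real.rpow_le_rpow zero_le_one h1 hγ0
            calc Mtot = Mtot * 1 := (mul_one _).symm
              _ ≤ (C_μ + Mtot) * ((4 * κ ^ 2) ^ (γ - 1) * r ^ (γ - 1)) := by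
                  apply mul_le_mul (by linarith) this zero_le_one (by linarith)
              _ = K₀ * r ^ (γ - 1) := by rw [hK₀]; ring
  -- key geometric lemma: preimage slice inclusion
  have hslice : ∀ v ∈ Set.Icc (0:ℝ) 1, ∃ y : EuclideanSpace ℝ (Fin d), ‖y‖ = 1 ∧
      ∀ ς : EuclideanSpace ℝ (Fin d), ‖ς‖ = 1 → f (v, ς) ∈ A → ς ∈ ball y (2 * κ ^ 2 * r) := by
    intro v hv
    have hdet := hσinv v hv
    set N : EuclideanSpace ℝ (Fin d) := matVec (σ v)⁻¹ x with hN
    have hMN : matVec (σ v) N = x := matVec_inv_matVec _ hdet x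
    have hb1 : κ⁻¹ * ‖N‖ ≤ 1 := by
      have h := (hell v hv N).1; rwa [hMN, hx] at h
    have hb2 : (1:ℝ) ≤ κ * ‖N‖ := by
      have h := (hell v hv N).2; rwa [hMN, hx] at h
    have hNpos : (0:ℝ) < ‖N‖ := by nlinarith
    have hNne : N ≠ 0 := fun h => by simp [h] at hNpos
    refine ⟨‖N‖⁻¹ • N, by rw [norm_smul, Real.norm_eq_abs,
      abs_of_nonneg (inv_nonneg.2 hNpos.le), inv_mul_cancel₀ hNpos.ne'], ?_⟩
    intro ς hς hςA
    -- general bound ‖matVec (σ v)⁻¹ z‖ ≤ κ * ‖z‖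
    have hinvbd : ∀ z : EuclideanSpace ℝ (Fin d), ‖matVec (σ v)⁻¹ z‖ ≤ κ * ‖z‖ := by
      intro z
      have h := (hell v hv (matVec (σ v)⁻¹ z)).1
      rw [matVec_inv_matVec _ hdet] at h
      calc ‖matVec (σ v)⁻¹ z‖ = κ * (κ⁻¹ * ‖matVec (σ v)⁻¹ z‖) := by
            field_simp
        _ ≤ κ * ‖z‖ := by nlinarith [norm_nonneg (matVec (σ v)⁻¹ z)]
    set T : EuclideanSpace ℝ (Fin d) := matVec (σ v) ς with hT
    have hTub : ‖T‖ ≤ κ := by have h := (hell v hv ς).2; rwa [hς, mul_one] at h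
    have hTlb : κ⁻¹ ≤ ‖T‖ := by have h := (hell v hv ς).1; rwa [hς, mul_one] at h
    have hTpos : (0:ℝ) < ‖T‖ := lt_of_lt_of_le (by positivity) hTlb
    -- p := matVec (σ v)⁻¹ (f (v,ς)) = ‖T‖⁻¹ • ς
    set u : EuclideanSpace ℝ (Fin d) := f (v, ς) with hu
    have hu_eq : u = ‖T‖⁻¹ • T := rfl
    set p : EuclideanSpace ℝ (Fin d) := matVec (σ v)⁻¹ u with hp
    have hp_eq : p = ‖T‖⁻¹ • ς := by
      rw [hp, hu_eq, matVec_smul, hT, matVec_matVec_inv _ hdet]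
    have hpnorm : ‖p‖ = ‖T‖⁻¹ := by
      rw [hp_eq, norm_smul, Real.norm_eq_abs, abs_of_nonneg (inv_nonneg.2 hTpos.le), hς, mul_one]
    have hpne : p ≠ 0 := by
      rw [hp_eq]
      intro h
      rcases smul_eq_zero.1 h with h' | h'
      · exact (inv_ne_zero hTpos.ne') h'
      · rw [h'] at hς; simp at hς
    have hpnorm_eq : ‖p‖⁻¹ • p = ς := by
      rw [hpnorm, hp_eq, inv_inv, smul_smul, mul_inv_cancel₀ hTpos.ne', one_smul]
    have key : ‖ς - ‖N‖⁻¹ • N‖ ≤ 2 * ‖p - N‖ / ‖p‖ := by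
      have := normalize_sub_le p N hpne
      rwa [hpnorm_eq] at this
    have hdiff : p - N = matVec (σ v)⁻¹ (u - x) := by
      rw [matVec_sub, ← hp, ← hN]
    have hux : ‖u - x‖ < r := by
      have : u ∈ ball x r := hςA.1
      rwa [mem_ball, dist_eq_norm] at this
    have hbd : ‖p - N‖ ≤ κ * ‖u - x‖ := by rw [hdiff]; exact hinvbd _
    rw [mem_ball, dist_eq_norm]
    calc ‖ς - ‖N‖⁻¹ • N‖ ≤ 2 * ‖p - N‖ / ‖p‖ := key
      _ = 2 * ‖p - N‖ * ‖T‖ := by rw [hpnorm]; field_simp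
      _ ≤ 2 * (κ * ‖u - x‖) * κ := by
          apply mul_le_mul (by nlinarith [norm_nonneg (p - N)]) hTub hTpos.le
          positivity
      _ < 2 * κ ^ 2 * r := by nlinarith
  -- measure-theoretic assembly
  have hmuS : muS d α σ μ A = ∫⁻ p in f ⁻¹' A, g p ∂ν := by
    simp only [muS]
    rw [← hf_def, ← hg_def, ← hν_def, Measure.map_apply hf hA, withDensity_apply _ (hf hA)]
  have hae1 : ∀ᵐ p : ℝ × EuclideanSpace ℝ (Fin d) ∂ν, ‖p.2‖ = 1 := by
    rw [ae_iff]
    have hset : {p : ℝ × EuclideanSpace ℝ (Fin d) | ¬ ‖p.2‖ = 1}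
        = Set.univ ×ˢ {ς : EuclideanSpace ℝ (Fin d) | ‖ς‖ ≠ 1} := by ext p; simp
    rw [hν_def, hset, Measure.prod_prod, hμsph, mul_zero]
  have hae2 : ∀ᵐ p : ℝ × EuclideanSpace ℝ (Fin d) ∂ν, p.1 ∈ Set.Icc (0:ℝ) 1 := by
    rw [ae_iff]
    have hset : {p : ℝ × EuclideanSpace ℝ (Fin d) | ¬ p.1 ∈ Set.Icc (0:ℝ) 1}
        = (Set.Icc (0:ℝ) 1)ᶜ ×ˢ (Set.univ : Set (EuclideanSpace ℝ (Fin d))) := by ext p; simp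
    rw [hν_def, hset, Measure.prod_prod, Measure.restrict_apply measurableSet_Icc.compl]
    simp
  have hgbd : ∀ᵐ p ∂(ν.restrict (f ⁻¹' A)), g p ≤ ENNReal.ofReal (κ ^ α) := by
    refine ae_restrict_of_ae ((hae1.and hae2).mono ?_)
    rintro p ⟨h1, h2⟩
    rw [hg_def]
    apply ENNReal.ofReal_le_ofReal
    apply Real.rpow_le_rpow (norm_nonneg _) _ hα0.le
    have h := (hell p.1 h2 p.2).2
    rwa [h1, mul_one] at h
  have step1 : ∫⁻ p in f ⁻¹' A, g p ∂ν ≤ ENNReal.ofReal (κ ^ α) * ν (f ⁻¹' A) := by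
    calc ∫⁻ p in f ⁻¹' A, g p ∂ν
        ≤ ∫⁻ _ in f ⁻¹' A, ENNReal.ofReal (κ ^ α) ∂ν := lintegral_mono_ae hgbd
      _ = ENNReal.ofReal (κ ^ α) * ν (f ⁻¹' A) := setLIntegral_const _ _
  have hslicebd : ∀ v ∈ Set.Icc (0:ℝ) 1,
      μ (Prod.mk v ⁻¹' (f ⁻¹' A)) ≤ ENNReal.ofReal (K₀ * r ^ (γ - 1)) := by
    intro v hv
    obtain ⟨y, hy, hincl⟩ := hslice v hv
    have hsub : Prod.mk v ⁻¹' (f ⁻¹' A) ∩ {ς : EuclideanSpace ℝ (Fin d) | ‖ς‖ = 1}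
        ⊆ ball y (2 * κ ^ 2 * r) ∩ sphere (0:EuclideanSpace ℝ (Fin d)) 1 := by
      rintro ς ⟨h1, h2⟩
      exact ⟨hincl ς h2 h1, by rwa [mem_sphere_zero_iff_norm]⟩
    calc μ (Prod.mk v ⁻¹' (f ⁻¹' A))
        ≤ μ ((Prod.mk v ⁻¹' (f ⁻¹' A) ∩ {ς | ‖ς‖ = 1}) ∪ {ς : EuclideanSpace ℝ (Fin d) | ‖ς‖ ≠ 1}) := by
          apply measure_mono
          intro ς h
          by_cases hn : ‖ς‖ = 1
          · exact Or.inl ⟨h, hn⟩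
          · exact Or.inr hn
      _ ≤ μ (Prod.mk v ⁻¹' (f ⁻¹' A) ∩ {ς | ‖ς‖ = 1}) + μ {ς : EuclideanSpace ℝ (Fin d) | ‖ς‖ ≠ 1} :=
          measure_union_le _ _
      _ = μ (Prod.mk v ⁻¹' (f ⁻¹' A) ∩ {ς | ‖ς‖ = 1}) := by rw [hμsph, add_zero]
      _ ≤ μ (ball y (2 * κ ^ 2 * r) ∩ sphere (0:EuclideanSpace ℝ (Fin d)) 1) := measure_mono hsub
      _ ≤ ENNReal.ofReal (K₀ * r ^ (γ - 1)) := hconc2 y hy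
  have step2 : ν (f ⁻¹' A) ≤ ENNReal.ofReal (K₀ * r ^ (γ - 1)) := by
    rw [hν_def, Measure.prod_apply (hf hA)]
    calc ∫⁻ v, μ (Prod.mk v ⁻¹' (f ⁻¹' A)) ∂((volume : Measure ℝ).restrict (Set.Icc 0 1))
        ≤ ∫⁻ _, ENNReal.ofReal (K₀ * r ^ (γ - 1)) ∂((volume : Measure ℝ).restrict (Set.Icc 0 1)) := by
          apply lintegral_mono_ae
          filter_upwards [ae_restrict_mem measurableSet_Icc] with v hv using hslicebd v hv
      _ = ENNReal.ofReal (K₀ * r ^ (γ - 1)) := by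
          rw [lintegral_const, Measure.restrict_apply_univ, Real.volume_Icc]
          simp
  calc muS d α σ μ A = ∫⁻ p in f ⁻¹' A, g p ∂ν := hmuS
    _ ≤ ENNReal.ofReal (κ ^ α) * ν (f ⁻¹' A) := step1
    _ ≤ ENNReal.ofReal (κ ^ α) * ENNReal.ofReal (K₀ * r ^ (γ - 1)) := mul_le_mul_right step2 _
    _ = ENNReal.ofReal (κ ^ α * K₀ * r ^ (γ - 1)) := by
        rw [← ENNReal.ofReal_mul hκα.le]
        congr 1
        rw [hK₀]
        ring
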